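/- arXiv:2311.15976 — 2 statements merged into one kernel-verified Lean document; each statement's English description precedes it below -/
import Mathlib

section
/- If g ∈ GL_n(k) has finite order ℓ, where k is a number field of degree d over ℚ, then ℓ ≤ 4(nd)^(2n). -/
open Polynomial Finset IntermediateField

section TotientLemmas

private lemma pp_aux' {q b : ℕ} (hq : 2 ≤ q) : (q+1)^(b+1) ≤ ((q+1)^b * q)^2 := by
  have h1 : (q+1)^b ≤ ((q+1)^b)^2 := Nat.le_self_pow (by norm_num) _
  have h2 : q + 1 ≤ q^2 := by nlinarith
  calc (q+1)^(b+1) = (q+1)^b * (q+1) := pow_succ _ _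
    _ ≤ ((q+1)^b)^2 * q^2 := Nat.mul_le_mul h1 h2
    _ = ((q+1)^b * q)^2 := by ring

private lemma odd_prime_ge3' {p a : ℕ} (hp : Nat.Prime p) (ha : 0 < a)
    (hodd : Odd (p^a)) : 3 ≤ p := by
  rcases eq_or_ne p 2 with rfl | hne
  · exact absurd hodd (by simpa using Nat.even_pow.mpr ⟨even_two, ha.ne'⟩)
  · have := hp.two_le; omega

private lemma odd_le_totient_sq : ∀ u : ℕ, Odd u → u ≤ u.totient ^ 2 := by
  intro u
  induction u using Nat.recOnPosPrimePosCoprime with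
  | prime_pow p a hp ha =>
    intro hodd
    have hp3 := odd_prime_ge3' hp ha hodd
    obtain ⟨q, rfl⟩ : ∃ q, p = q + 1 := ⟨p - 1, by omega⟩
    obtain ⟨b, rfl⟩ : ∃ b, a = b + 1 := ⟨a - 1, by omega⟩
    rw [Nat.totient_prime_pow hp ha]
    simpa using pp_aux' (b := b) (by omega)
  | zero => intro h; simp at h
  | one => intro _; simp
  | coprime a b ha hb hab iha ihb =>
    intro hodd
    rw [Nat.odd_mul] at hodd
    rw [Nat.totient_mul hab, mul_pow]
    exact Nat.mul_le_mul (iha hodd.1) (ihb hodd.2)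

private lemma odd_two_mul_le_totient_sq :
    ∀ u : ℕ, Odd u → u ≠ 1 → u ≠ 3 → 2 * u ≤ u.totient ^ 2 := by
  intro u
  induction u using Nat.recOnPosPrimePosCoprime with
  | prime_pow p a hp ha =>
    intro hodd h1 h3
    have hp3 := odd_prime_ge3' hp ha hodd
    rw [Nat.totient_prime_pow hp ha]
    rcases Nat.lt_or_ge a 2 with h | h
    · interval_cases a
      have hp5 : 5 ≤ p := by
        have : p ≠ 3 := by rintro rfl; simp at h3
        have := hp.two_le
        have hodd' : Odd p := by simpa using hodd
        obtain ⟨c, hc⟩ := hodd'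
        omega
      obtain ⟨q, rfl⟩ : ∃ q, p = q + 5 := ⟨p - 5, by omega⟩
      simp only [pow_one, Nat.sub_self, pow_zero, one_mul]
      have e : q + 5 - 1 = q + 4 := by omega
      rw [e]; nlinarith
    · obtain ⟨q, rfl⟩ : ∃ q, p = q + 3 := ⟨p - 3, by omega⟩
      have hA : (q+3)^a ≤ (q+3)^(2*(a-1)) :=
        Nat.pow_le_pow_right (by omega) (by omega)
      calc 2 * (q+3)^a ≤ 4 * (q+3)^(2*(a-1)) := by
            have := hA; omega
        _ ≤ (q+2)^2 * ((q+3)^(a-1))^2 := by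
            rw [← pow_mul]
            have h4 : 4 ≤ (q+2)^2 := by nlinarith
            calc 4 * (q+3)^(2*(a-1)) ≤ (q+2)^2 * (q+3)^(2*(a-1)) :=
                  Nat.mul_le_mul h4 le_rfl
              _ = (q+2)^2 * (q+3)^((a-1)*2) := by rw [mul_comm 2 (a-1)]
        _ = ((q+3)^(a-1) * (q+2))^2 := by ring
  | zero => intro h; simp at h
  | one => intro _ h; omega
  | coprime a b ha hb hab iha ihb =>
    intro hodd _ _
    rw [Nat.odd_mul] at hodd
    have hae : a ≠ 1 := by omega
    have hbe : b ≠ 1 := by omega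
    rw [Nat.totient_mul hab, mul_pow]
    rcases eq_or_ne a 3 with rfl | ha3
    · have hb3 : b ≠ 3 := by rintro rfl; simp [Nat.Coprime] at hab
      have h2b : 2 * b ≤ b.totient ^ 2 := ihb hodd.2 hbe hb3
      have h32 : Nat.totient 3 = 2 := by decide
      rw [h32]
      nlinarith
    · have h2a : 2 * a ≤ a.totient ^ 2 := iha hodd.1 hae ha3
      have hbb : b ≤ b.totient ^ 2 := odd_le_totient_sq b hodd.2
      calc 2 * (a * b) = (2 * a) * b := by ring
        _ ≤ a.totient ^2 * b.totient ^2 := Nat.mul_le_mul h2a hbb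

private lemma le_totient_sq {m : ℕ} (h0 : m ≠ 0) (h2 : m ≠ 2) (h6 : m ≠ 6) :
    m ≤ m.totient ^ 2 := by
  obtain ⟨a, u, hu, rfl⟩ := Nat.exists_eq_two_pow_mul_odd h0
  have hcop : Nat.Coprime (2^a) u := by
    apply Nat.Coprime.pow_left
    have hnd : ¬ 2 ∣ u := by obtain ⟨c, rfl⟩ := hu; omega
    exact (Nat.Prime.coprime_iff_not_dvd Nat.prime_two).mpr hnd
  rw [Nat.totient_mul hcop, mul_pow]
  match a with
  | 0 => simpa using odd_le_totient_sq u hu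
  | 1 =>
    have hu1 : u ≠ 1 := by rintro rfl; simp at h2
    have hu3 : u ≠ 3 := by rintro rfl; norm_num at h6
    have := odd_two_mul_le_totient_sq u hu hu1 hu3
    simpa [Nat.totient_two] using this
  | (b+2) =>
    have h1 : Nat.totient (2^(b+2)) = 2^(b+1) := by
      rw [Nat.totient_prime_pow Nat.prime_two (by omega)]
      simp
    rw [h1]
    have : 2^(b+2) ≤ (2^(b+1))^2 := by
      rw [← pow_mul]
      exact Nat.pow_le_pow_right (by norm_num) (by omega)
    exact Nat.mul_le_mul this (odd_le_totient_sq u hu)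

end TotientLemmas

private lemma cyclo_coprime' (k : Type*) [Field k] [CharZero k] {m₁ m₂ : ℕ} (h : m₁ ≠ m₂) :
    IsCoprime (cyclotomic m₁ k) (cyclotomic m₂ k) := by
  have h0 := Polynomial.cyclotomic.isCoprime_rat (n := m₁) (m := m₂) h
  have := h0.map (Polynomial.mapRingHom (algebraMap ℚ k))
  simpa [Polynomial.coe_mapRingHom, Polynomial.map_cyclotomic] using this

private lemma card_S_le (k : Type*) [Field k] [CharZero k] (n : ℕ)
    (p : k[X]) (hp0 : p ≠ 0) (hpdeg : p.natDegree ≤ n)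
    (S : Finset ℕ)
    (hSsub : ∀ m ∈ S, ¬ IsCoprime p (cyclotomic m k)) :
    S.card ≤ n := by
  classical
  set f : ℕ → k[X] := fun m => EuclideanDomain.gcd p (cyclotomic m k) with hfdef
  have hpair : (S : Set ℕ).Pairwise (Function.onFun IsCoprime f) := by
    intro m₁ h₁ m₂ h₂ hne
    have hc := cyclo_coprime' k hne
    exact (hc.of_isCoprime_of_dvd_left (EuclideanDomain.gcd_dvd_right _ _))
      |>.of_isCoprime_of_dvd_right (EuclideanDomain.gcd_dvd_right _ _)
  have hfdvdp : ∀ m ∈ S, f m ∣ p := fun m _ => EuclideanDomain.gcd_dvd_left _ _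
  have hfne : ∀ m ∈ S, f m ≠ 0 := by
    intro m hm h
    rw [hfdef] at h
    exact hp0 (EuclideanDomain.gcd_eq_zero_iff.mp h).1
  have hfnu : ∀ m ∈ S, ¬ IsUnit (f m) := by
    intro m hm hu
    exact hSsub m hm (EuclideanDomain.gcd_isUnit_iff.mp hu)
  have hfdeg : ∀ m ∈ S, 1 ≤ (f m).natDegree := by
    intro m hm
    by_contra h
    push_neg at h
    interval_cases hdeg : (f m).natDegree
    have := Polynomial.eq_C_of_natDegree_eq_zero hdeg
    exact hfnu m hm (by
      rw [this]
      exact Polynomial.isUnit_C.mpr (Ne.isUnit (fun hc => hfne m hm (by rw [this, hc, map_zero]))))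
  have hprod : ∏ m ∈ S, f m ∣ p := Finset.prod_dvd_of_coprime hpair (fun m hm => hfdvdp m hm)
  calc S.card = ∑ m ∈ S, 1 := by simp
    _ ≤ ∑ m ∈ S, (f m).natDegree := Finset.sum_le_sum hfdeg
    _ = (∏ m ∈ S, f m).natDegree := (Polynomial.natDegree_prod _ _ hfne).symm
    _ ≤ p.natDegree := Polynomial.natDegree_le_of_dvd hprod hp0
    _ ≤ n := hpdeg

private lemma totient_le_of_not_coprime (k : Type*) [Field k] [NumberField k] (n d : ℕ)
    (hd : Module.finrank ℚ k = d)
    (p : k[X]) (hp0 : p ≠ 0) (hpdeg : p.natDegree ≤ n)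
    (m : ℕ) (hm : 0 < m)
    (hnc : ¬ IsCoprime p (cyclotomic m k)) :
    m.totient ≤ n * d := by
  classical
  set f : k[X] := EuclideanDomain.gcd p (cyclotomic m k) with hfdef
  have hfdvdp : f ∣ p := EuclideanDomain.gcd_dvd_left _ _
  have hfdvdc : f ∣ cyclotomic m k := EuclideanDomain.gcd_dvd_right _ _
  have hfne : f ≠ 0 := fun h => hp0 (EuclideanDomain.gcd_eq_zero_iff.mp h).1
  have hfnu : ¬ IsUnit f := fun hu => hnc (EuclideanDomain.gcd_isUnit_iff.mp hu)
  have hfdeg : f.degree ≠ 0 := by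
    intro h
    exact hfnu (Polynomial.isUnit_iff_degree_eq_zero.mpr h)
  set K := AlgebraicClosure k with hK
  have hmapne : (f.map (algebraMap k K)).degree ≠ 0 := by
    rwa [Polynomial.degree_map]
  obtain ⟨α, hα⟩ := IsAlgClosed.exists_root (f.map (algebraMap k K)) hmapne
  have hαf : aeval α f = 0 := by
    rwa [Polynomial.aeval_def, Polynomial.eval₂_eq_eval_map]
  have hαp : aeval α p = 0 := by
    obtain ⟨q, hq⟩ := hfdvdp
    rw [hq, map_mul, hαf, zero_mul]
  have hαc : aeval α (cyclotomic m k) = 0 := by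
    obtain ⟨q, hq⟩ := hfdvdc
    rw [hq, map_mul, hαf, zero_mul]
  have hroot : (cyclotomic m K).IsRoot α := by
    rw [← Polynomial.map_cyclotomic m (algebraMap k K)]
    rw [Polynomial.IsRoot, Polynomial.eval_map, ← Polynomial.aeval_def]
    exact hαc
  have hprim : IsPrimitiveRoot α m := (Polynomial.isRoot_cyclotomic_iff_charZero hm).mp hroot
  have hminQ : cyclotomic m ℚ = minpoly ℚ α := Polynomial.cyclotomic_eq_minpoly_rat hprim hm
  have htot : m.totient = (minpoly ℚ α).natDegree := by
    rw [← hminQ, Polynomial.natDegree_cyclotomic]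
  have hαint : IsIntegral k α := IsAlgebraic.isIntegral ⟨p, hp0, hαp⟩
  haveI : FiniteDimensional k k⟮α⟯ := IntermediateField.adjoin.finiteDimensional hαint
  haveI : IsScalarTower ℚ k k⟮α⟯ :=
    IsScalarTower.of_algebraMap_eq' (Subsingleton.elim _ _)
  haveI : FiniteDimensional ℚ k⟮α⟯ := FiniteDimensional.trans ℚ k k⟮α⟯
  haveI : IsScalarTower ℚ k⟮α⟯ K :=
    IsScalarTower.of_algebraMap_eq' (Subsingleton.elim _ _)
  have hgen : algebraMap k⟮α⟯ K (IntermediateField.AdjoinSimple.gen k α) = α :=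
    IntermediateField.AdjoinSimple.algebraMap_gen k α
  have hmineq : minpoly ℚ (IntermediateField.AdjoinSimple.gen k α) = minpoly ℚ α := by
    rw [← hgen]
    exact (minpoly.algebraMap_eq (A := ℚ) (B' := K) (algebraMap k⟮α⟯ K).injective _).symm
  have h1 : (minpoly ℚ α).natDegree ≤ Module.finrank ℚ k⟮α⟯ := by
    rw [← hmineq]
    exact minpoly.natDegree_le _
  have h2 : Module.finrank ℚ k⟮α⟯ = d * Module.finrank k k⟮α⟯ := by
    rw [← hd, Module.finrank_mul_finrank ℚ k k⟮α⟯]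
  have h3 : Module.finrank k k⟮α⟯ = (minpoly k α).natDegree :=
    IntermediateField.adjoin.finrank hαint
  have h4 : (minpoly k α).natDegree ≤ n := by
    have hdvd : minpoly k α ∣ p := minpoly.dvd k α hαp
    exact le_trans (Polynomial.natDegree_le_of_dvd hdvd hp0) hpdeg
  rw [htot]
  calc (minpoly ℚ α).natDegree ≤ Module.finrank ℚ k⟮α⟯ := h1
    _ = d * Module.finrank k k⟮α⟯ := h2
    _ ≤ d * n := Nat.mul_le_mul_left d (h3 ▸ h4)
    _ = n * d := Nat.mul_comm d n

private lemma arith_final (n d : ℕ) (hn : 1 ≤ n) (hd : 1 ≤ d)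
    (S : Finset ℕ) (hpos : ∀ m ∈ S, 0 < m) (hcard : S.card ≤ n)
    (htot : ∀ m ∈ S, m.totient ≤ n * d)
    (L : ℕ) (hL : L ∣ ∏ m ∈ S, m) :
    L ≤ 4 * (n * d) ^ (2 * n) := by
  classical
  have hnd1 : 1 ≤ n * d := Nat.mul_le_mul hn hd
  have hbase1 : 1 ≤ (n*d)^2 := Nat.one_le_pow _ _ hnd1
  have hPpos : 0 < ∏ m ∈ S, m := Finset.prod_pos hpos
  have hLP : L ≤ ∏ m ∈ S, m := Nat.le_of_dvd hPpos hL
  set q : ℕ → Prop := fun m => m = 2 ∨ m = 6 with hq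
  have hsplit : (∏ m ∈ S.filter q, m) * (∏ m ∈ S.filter (fun m => ¬ q m), m) = ∏ m ∈ S, m :=
    Finset.prod_filter_mul_prod_filter_not S q _
  have hTbound : ∀ N : ℕ, (S.filter (fun m => ¬ q m)).card ≤ N →
      (∏ m ∈ S.filter (fun m => ¬ q m), m) ≤ ((n*d)^2)^N := by
    intro N hcardN
    calc (∏ m ∈ S.filter (fun m => ¬ q m), m)
        ≤ ∏ m ∈ S.filter (fun m => ¬ q m), (n*d)^2 := by
          apply Finset.prod_le_prod'
          intro m hm
          rw [Finset.mem_filter] at hm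
          have h0 : m ≠ 0 := (hpos m hm.1).ne'
          have hq2 : m ≠ 2 := fun h => hm.2 (Or.inl h)
          have hq6 : m ≠ 6 := fun h => hm.2 (Or.inr h)
          calc m ≤ m.totient ^ 2 := le_totient_sq h0 hq2 hq6
            _ ≤ (n*d)^2 := Nat.pow_le_pow_left (htot m hm.1) 2
      _ = ((n*d)^2)^(S.filter (fun m => ¬ q m)).card := Finset.prod_const _
      _ ≤ ((n*d)^2)^N := Nat.pow_le_pow_right hbase1 hcardN
  have hpow : ((n*d)^2)^n = (n*d)^(2*n) := (pow_mul (n*d) 2 n).symm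
  by_cases h6 : 6 ∈ S
  · have hnd2 : 2 ≤ n * d := by
      have := htot 6 h6
      have h62 : Nat.totient 6 = 2 := by decide
      omega
    have h6q : 6 ∈ S.filter q := Finset.mem_filter.mpr ⟨h6, Or.inr rfl⟩
    have hcards : (S.filter q).card + (S.filter (fun m => ¬ q m)).card = S.card :=
      Finset.card_filter_add_card_filter_not _
    have hc1 : 1 ≤ (S.filter q).card := Finset.card_pos.mpr ⟨6, h6q⟩
    have hcT : (S.filter (fun m => ¬ q m)).card ≤ n - 1 := by omega
    have hfq : (∏ m ∈ S.filter q, m) ≤ 12 := by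
      have hsub : S.filter q ⊆ ({2, 6} : Finset ℕ) := by
        intro m hm
        rcases (Finset.mem_filter.mp hm).2 with h | h <;> simp [h]
      calc (∏ m ∈ S.filter q, m) ≤ ∏ m ∈ ({2,6} : Finset ℕ), m := by
            apply Finset.prod_le_prod_of_subset_of_one_le' hsub
            intro i hi _
            fin_cases hi <;> norm_num
        _ = 12 := by decide
    calc L ≤ ∏ m ∈ S, m := hLP
      _ = (∏ m ∈ S.filter q, m) * (∏ m ∈ S.filter (fun m => ¬ q m), m) := hsplit.symm
      _ ≤ 12 * ((n*d)^2)^(n-1) := Nat.mul_le_mul hfq (hTbound (n-1) hcT)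
      _ ≤ (4 * (n*d)^2) * ((n*d)^2)^(n-1) := by
          apply Nat.mul_le_mul_right
          nlinarith
      _ = 4 * ((n*d)^2)^n := by
          obtain ⟨n', rfl⟩ : ∃ n', n = n' + 1 := ⟨n - 1, by omega⟩
          simp only [Nat.add_sub_cancel]
          ring
      _ = 4 * (n*d)^(2*n) := by rw [hpow]
  · have hfq : (∏ m ∈ S.filter q, m) ≤ 2 := by
      have hsub : S.filter q ⊆ ({2} : Finset ℕ) := by
        intro m hm
        rcases (Finset.mem_filter.mp hm).2 with h | h
        · simp [h]
        · exact absurd ((Finset.mem_filter.mp hm).1) (h ▸ h6)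
      calc (∏ m ∈ S.filter q, m) ≤ ∏ m ∈ ({2} : Finset ℕ), m := by
            apply Finset.prod_le_prod_of_subset_of_one_le' hsub
            intro i hi _
            fin_cases hi; norm_num
        _ = 2 := by decide
    have hcT : (S.filter (fun m => ¬ q m)).card ≤ n :=
      le_trans (Finset.card_le_card (Finset.filter_subset _ _)) hcard
    calc L ≤ ∏ m ∈ S, m := hLP
      _ = (∏ m ∈ S.filter q, m) * (∏ m ∈ S.filter (fun m => ¬ q m), m) := hsplit.symm
      _ ≤ 2 * ((n*d)^2)^n := Nat.mul_le_mul hfq (hTbound n hcT)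
      _ ≤ 4 * (n*d)^(2*n) := by rw [hpow] at *; omega

theorem finite_order_bound_in_GL_numberField
    (k : Type*) [Field k] [NumberField k] (d : ℕ)
    (hd : Module.finrank ℚ k = d) (n : ℕ) (hn : 1 ≤ n)
    (g : GL (Fin n) k) (ℓ : ℕ) (hfin : IsOfFinOrder g) (hℓ : orderOf g = ℓ) :
    ℓ ≤ 4 * (n * d) ^ (2 * n) := by
  classical
  subst hℓ
  set L := orderOf g with hL
  have hLpos : 0 < L := hfin.orderOf_pos
  have hd1 : 1 ≤ d := by
    rw [← hd]
    exact Module.finrank_pos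
  set A : Matrix (Fin n) (Fin n) k := (g : Matrix (Fin n) (Fin n) k) with hAdef
  have hA : A ^ L = 1 := by
    have h1 := pow_orderOf_eq_one g
    have h2 : ((g ^ L : GL (Fin n) k) : Matrix (Fin n) (Fin n) k) = 1 := by rw [h1]; rfl
    rwa [Units.val_pow_eq_pow_val] at h2
  have hint : IsIntegral k A := IsIntegral.of_finite k A
  set p : k[X] := minpoly k A with hpdef
  have hp0 : p ≠ 0 := minpoly.ne_zero hint
  have hpdvd : p ∣ X ^ L - 1 := by
    apply minpoly.dvd
    rw [map_sub, aeval_X_pow, map_one, hA, sub_self]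
  have hpdeg : p.natDegree ≤ n := by
    have h1 : p ∣ A.charpoly := minpoly.dvd k A A.aeval_self_charpoly
    have := Polynomial.natDegree_le_of_dvd h1 A.charpoly_monic.ne_zero
    rwa [A.charpoly_natDegree_eq_dim, Fintype.card_fin] at this
  -- the finite set of relevant cyclotomic indices
  set S : Finset ℕ := L.divisors.filter (fun m => ¬ IsCoprime p (cyclotomic m k)) with hSdef
  have hSsub : ∀ m ∈ S, ¬ IsCoprime p (cyclotomic m k) := fun m hm =>
    (Finset.mem_filter.mp hm).2
  have hmem : ∀ m ∈ S, 0 < m ∧ m ∣ L := by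
    intro m hm
    have h1 := (Finset.mem_filter.mp hm).1
    rw [Nat.mem_divisors] at h1
    exact ⟨Nat.pos_of_mem_divisors (Finset.mem_filter.mp hm).1, h1.1⟩
  -- p divides the product of the cyclotomic polynomials indexed by S
  have hprodsplit :
      (∏ m ∈ S, cyclotomic m k) *
        (∏ m ∈ L.divisors.filter (fun m => IsCoprime p (cyclotomic m k)), cyclotomic m k)
      = X ^ L - 1 := by
    rw [← Polynomial.prod_cyclotomic_eq_X_pow_sub_one hLpos k]
    rw [← Finset.prod_filter_mul_prod_filter_not L.divisors
      (fun m => ¬ IsCoprime p (cyclotomic m k))]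
    congr 1
    apply Finset.prod_congr _ (fun _ _ => rfl)
    ext m
    simp
  have hcop : IsCoprime p
      (∏ m ∈ L.divisors.filter (fun m => IsCoprime p (cyclotomic m k)), cyclotomic m k) :=
    IsCoprime.prod_right (fun m hm => (Finset.mem_filter.mp hm).2)
  have hpS : p ∣ ∏ m ∈ S, cyclotomic m k := by
    refine hcop.dvd_of_dvd_mul_right ?_
    rwa [hprodsplit]
  -- L divides the product of the elements of S
  set P : ℕ := ∏ m ∈ S, m with hPdef
  have hPpos : 0 < P := Finset.prod_pos (fun m hm => (hmem m hm).1)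
  have hSP : S ⊆ P.divisors := by
    intro m hm
    rw [Nat.mem_divisors]
    exact ⟨Finset.dvd_prod_of_mem _ hm, hPpos.ne'⟩
  have hdvP : p ∣ X ^ P - 1 := by
    rw [← Polynomial.prod_cyclotomic_eq_X_pow_sub_one hPpos k]
    exact hpS.trans (Finset.prod_dvd_prod_of_subset S P.divisors (fun m => cyclotomic m k) hSP)
  have hAP : A ^ P = 1 := by
    obtain ⟨q, hq⟩ := hdvP
    have haev : aeval A p = 0 := minpoly.aeval k A
    have h0 : aeval A (X ^ P - 1 : k[X]) = 0 := by
      rw [hq, map_mul, haev, zero_mul]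
    rw [map_sub, aeval_X_pow, map_one] at h0
    exact sub_eq_zero.mp h0
  have hgP : g ^ P = 1 := by
    apply Units.ext
    rw [Units.val_pow_eq_pow_val]
    exact hAP
  have hLP : L ∣ P := orderOf_dvd_of_pow_eq_one hgP
  -- pairwise coprimality and cardinality
  have hcard : S.card ≤ n := card_S_le k n p hp0 hpdeg S hSsub
  have htot : ∀ m ∈ S, m.totient ≤ n * d := fun m hm =>
    totient_le_of_not_coprime k n d hd p hp0 hpdeg m (hmem m hm).1 (hSsub m hm)
  exact arith_final n d hn hd1 S (fun m hm => (hmem m hm).1) hcard htot L hLP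
end

section
/- If every element of a finite subgroup F of GL_n(ℂ) has order at most M, and F contains an abelian subgroup A of index at most j, then |F| ≤ j · M^n. -/
open Polynomial Module

private lemma card_abelian_subgroup_le (n e : ℕ) (he : 0 < e)
    (A : Subgroup (GL (Fin n) ℂ)) [Finite A]
    (hcomm : ∀ a ∈ A, ∀ b ∈ A, a * b = b * a)
    (hexp : ∀ a : A, a ^ e = 1) :
    Nat.card A ≤ e ^ n := by
  classical
  -- the representation of `A` on `ℂⁿ`
  let π : A →* Module.End ℂ (Fin n → ℂ) :=
    { toFun := fun a => Matrix.toLin' ((a : GL (Fin n) ℂ) : Matrix (Fin n) (Fin n) ℂ)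
      map_one' := by simp [Matrix.toLin'_one]; rfl
      map_mul' := fun a b => by
        simp [Matrix.toLin'_mul, Module.End.mul_eq_comp] }
  have hinj : Function.Injective π := by
    intro a b h
    exact Subtype.ext (Units.ext (Matrix.toLin'.injective h))
  have hc : ∀ a b : A, Commute (π a) (π b) := by
    intro a b
    have hab : a * b = b * a := Subtype.ext (hcomm _ a.2 _ b.2)
    unfold Commute SemiconjBy
    rw [← map_mul, ← map_mul, hab]
  have hss : ∀ a : A, (π a).IsFinitelySemisimple := by
    intro a
    have hsf : Squarefree (X ^ e - C (1 : ℂ)) :=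
      (Polynomial.separable_X_pow_sub_C (1 : ℂ)
        (by exact_mod_cast Nat.cast_ne_zero.mpr he.ne') one_ne_zero).squarefree
    refine (Module.End.isSemisimple_of_squarefree_aeval_eq_zero hsf ?_).isFinitelySemisimple
    rw [map_sub, map_pow, aeval_X, aeval_C, ← map_pow, hexp a, map_one]
    simp
  -- simultaneous generalized eigenspace decomposition
  set W : (A → ℂ) → Submodule ℂ (Fin n → ℂ) :=
    fun χ => ⨅ a : A, (π a).maxGenEigenspace (χ a) with hW
  have hsup : ⨆ χ : A → ℂ, W χ = ⊤ :=
    Module.End.iSup_iInf_maxGenEigenspace_eq_top_of_iSup_maxGenEigenspace_eq_top_of_commute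
      (fun a : A => π a) (fun a b _ => hc a b)
      (fun a => Module.End.iSup_maxGenEigenspace_eq_top _)
  have hind : iSupIndep W :=
    Module.End.independent_iInf_maxGenEigenspace_of_forall_mapsTo (fun a : A => π a)
      (fun i j φ => Module.End.mapsTo_maxGenEigenspace_of_comm (hc j i) φ)
  haveI : Fintype {χ : A → ℂ // W χ ≠ ⊥} := hind.fintypeNeBotOfFiniteDimensional
  have hS : Fintype.card {χ : A → ℂ // W χ ≠ ⊥} ≤ n := by
    simpa using hind.subtype_ne_bot_le_finrank
  -- each `π a` acts on `W χ` as the scalar `χ a`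
  have hsc : ∀ (χ : A → ℂ) (a : A) (v : Fin n → ℂ), v ∈ W χ → π a v = χ a • v := by
    intro χ a v hv
    have h1 : v ∈ (π a).eigenspace (χ a) := by
      rw [← (hss a).maxGenEigenspace_eq_eigenspace (χ a)]
      exact (Submodule.mem_iInf _).mp hv a
    exact Module.End.mem_eigenspace_iff.mp h1
  -- the eigenvalues are `e`-th roots of unity
  have hroot : ∀ (χ : A → ℂ), W χ ≠ ⊥ → ∀ a : A, χ a ∈ nthRootsFinset e (1 : ℂ) := by
    intro χ hχ a
    obtain ⟨v, hvW, hv0⟩ := Submodule.exists_mem_ne_zero_of_ne_bot hχ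
    have hk : ∀ k : ℕ, ((π a) ^ k) v = (χ a) ^ k • v := by
      intro k
      induction k with
      | zero => simp
      | succ k ih =>
          rw [pow_succ, Module.End.mul_apply, hsc χ a v hvW, map_smul, ih,
            smul_smul, ← pow_succ']
    have h2 : v = (χ a) ^ e • v := by
      have := hk e
      rwa [← map_pow, hexp a, map_one, Module.End.one_apply] at this
    have h3 : (χ a) ^ e = 1 := by
      by_contra h
      have : ((χ a) ^ e - 1) • v = 0 := by
        rw [sub_smul, one_smul, ← h2, sub_self]
      rcases smul_eq_zero.mp this with h' | h'
      · exact h (by linear_combination h')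
      · exact hv0 h'
    exact (mem_nthRootsFinset he (1 : ℂ)).mpr h3
  -- the injection of `A` into tuples of roots of unity
  let Φ : A → ({χ : A → ℂ // W χ ≠ ⊥} → (nthRootsFinset e (1 : ℂ))) :=
    fun a χ => ⟨χ.1 a, hroot χ.1 χ.2 a⟩
  have hΦ : Function.Injective Φ := by
    intro a b hab
    apply hinj
    apply LinearMap.ext
    intro v
    have hv : v ∈ (⊤ : Submodule ℂ (Fin n → ℂ)) := trivial
    rw [← hsup] at hv
    refine Submodule.iSup_induction (motive := fun v => π a v = π b v) W hv ?_ (by simp) ?_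
    · intro χ x hx
      by_cases hχ : W χ = ⊥
      · rw [hχ, Submodule.mem_bot] at hx
        simp [hx]
      · have hval : χ a = χ b := by
          have := congrFun hab ⟨χ, hχ⟩
          exact Subtype.ext_iff.mp this
        rw [hsc χ a x hx, hsc χ b x hx, hval]
    · intro x y hx hy
      rw [map_add, map_add, hx, hy]
  have hcard1 : Nat.card A ≤
      Nat.card ({χ : A → ℂ // W χ ≠ ⊥} → (nthRootsFinset e (1 : ℂ))) :=
    Nat.card_le_card_of_injective Φ hΦ
  rw [Nat.card_fun] at hcard1
  have hβ : Nat.card (nthRootsFinset e (1 : ℂ)) ≤ e := by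
    rw [Nat.card_eq_finsetCard]
    calc (nthRootsFinset e (1 : ℂ)).card ≤ Multiset.card (nthRoots e (1 : ℂ)) := by
          rw [nthRootsFinset_def]; exact Multiset.toFinset_card_le _
      _ ≤ e := Polynomial.card_nthRoots e 1
  calc Nat.card A ≤ Nat.card (nthRootsFinset e (1 : ℂ)) ^ Nat.card {χ : A → ℂ // W χ ≠ ⊥} :=
        hcard1
    _ ≤ e ^ Nat.card {χ : A → ℂ // W χ ≠ ⊥} := Nat.pow_le_pow_left hβ _
    _ ≤ e ^ n := Nat.pow_le_pow_right he (by rw [Nat.card_eq_fintype_card]; exact hS)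

theorem finite_subgroup_card_le_of_abelian_index
    (n : ℕ) (F A : Subgroup (GL (Fin n) ℂ)) [Finite F] (hAF : A ≤ F)
    (hcomm : ∀ a ∈ A, ∀ b ∈ A, a * b = b * a)
    (j M : ℕ) (hj : A.relIndex F ≤ j)
    (hord : ∀ g ∈ F, orderOf g ≤ M) :
    Nat.card F ≤ j * M ^ n := by
  haveI hAfin : Finite A := by
    have : (A : Set (GL (Fin n) ℂ)).Finite :=
      (Set.toFinite (F : Set (GL (Fin n) ℂ))).subset hAF
    exact this.to_subtype
  letI : CommGroup A :=
    { (inferInstance : Group A) with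
      mul_comm := fun x y => Subtype.ext (hcomm _ x.2 _ y.2) }
  set e := Monoid.exponent A with hedef
  have hee : Monoid.ExponentExists A := Monoid.ExponentExists.of_finite
  have he : 0 < e := hee.exponent_pos
  have heM : e ≤ M := by
    obtain ⟨g, hg⟩ := Monoid.exists_orderOf_eq_exponent hee
    rw [hedef, ← hg, ← Subgroup.orderOf_coe]
    exact hord _ (hAF g.2)
  have hA : Nat.card A ≤ e ^ n :=
    card_abelian_subgroup_le n e he A hcomm (fun a => Monoid.pow_exponent_eq_one a)
  have hcard : Nat.card F = A.relIndex F * Nat.card A := by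
    rw [show A.relIndex F = (A.subgroupOf F).index from rfl,
      ← Subgroup.index_mul_card (A.subgroupOf F)]
    congr 1
    exact Nat.card_congr (Subgroup.subgroupOfEquivOfLe hAF).toEquiv
  rw [hcard]
  exact Nat.mul_le_mul hj (le_trans hA (Nat.pow_le_pow_left heM n))
end
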